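/- arXiv:1605.00240 — 4 statements merged into one kernel-verified Lean document; each statement's English description precedes it below -/
import Mathlib

section
/- Let G be a finite group with symmetric generating set S = S⁻¹, let H be a finite group acting on G by automorphisms via θ : H → Aut(G) such that the induced action of H on S is simply transitive. Then the semidirect product G ⋊_θ H acts transitively on the set of directed edges of the Cayley graph Cay(G,S), and this action is simply transitive (free and transitive). -/
theorem stmt3 (G H : Type*) [Group G] [Fintype G] [Group H] [Fintype H]
    (S : Set G) (hsymm : S = S⁻¹) (hgen : Subgroup.closure S = ⊤)
    (θ : H →* MulAut G) (hpres : ∀ (h : H), ∀ s ∈ S, θ h s ∈ S)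
    (hsimply : ∀ s₁ ∈ S, ∀ s₂ ∈ S, ∃! h : H, θ h s₁ = s₂) :
    -- the action of G ⋊[θ] H sends directed edges to directed edges
    (∀ x : G ⋊[θ] H, ∀ p : G × G, p.1⁻¹ * p.2 ∈ S →
      (x.left * θ x.right p.1)⁻¹ * (x.left * θ x.right p.2) ∈ S) ∧
    -- and it is simply transitive on directed edges
    (∀ p q : G × G, p.1⁻¹ * p.2 ∈ S → q.1⁻¹ * q.2 ∈ S →
      ∃! x : G ⋊[θ] H, (x.left * θ x.right p.1, x.left * θ x.right p.2) = q) := by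
  have key : ∀ (h : H) (a b c : G), (c * θ h a)⁻¹ * (c * θ h b) = θ h (a⁻¹ * b) := by
    intro h a b c
    simp [map_mul, mul_assoc]
  constructor
  · intro x p hp
    rw [key]
    exact hpres _ _ hp
  · intro p q hp hq
    obtain ⟨h, hh, huniq⟩ := hsimply _ hp _ hq
    refine ⟨⟨q.1 * (θ h p.1)⁻¹, h⟩, ?_, ?_⟩
    · have h2 : q.1 * (θ h p.1)⁻¹ * θ h p.2 = q.2 := by
        have : (θ h p.1)⁻¹ * θ h p.2 = θ h (p.1⁻¹ * p.2) := by simp [map_mul]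
        rw [mul_assoc, this, hh]
        group
      simp only [SemidirectProduct.left, SemidirectProduct.right] -- may be unneeded
      exact Prod.ext (by group) h2
    · intro y hy
      have h1 : y.left * θ y.right p.1 = q.1 := congrArg Prod.fst hy
      have h2 : y.left * θ y.right p.2 = q.2 := congrArg Prod.snd hy
      have hr : θ y.right (p.1⁻¹ * p.2) = q.1⁻¹ * q.2 := by
        rw [← key y.right p.1 p.2 y.left, h1, h2]
      have hyr : y.right = h := huniq _ hr
      have hyl : y.left = q.1 * (θ h p.1)⁻¹ := by
        rw [← hyr, eq_mul_inv_iff_mul_eq, h1]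
      exact SemidirectProduct.ext hyl hyr
end

section
/- Let G be a finite group with symmetric generating set S, K ≤ G of index 2 with K ∩ S = ∅, s₀ ∈ S, H a group, θ : H → Aut(G) with θ(H) preserving S and acting simply transitively on S, and T ⊆ H. Define the graph Γ with vertex set the undirected edges of Cay(G,S) where, for g ∈ K, e_g(h) = {g, g·θ(h)(s₀)}, and for g ∈ Ks₀, e_g(h) = {g·θ(h)(s₀⁻¹), g}, and edges of Γ are all pairs (e_g(h), e_g(ht)) for g ∈ G, h ∈ H, t ∈ T. Then the map f : K ⋊_θ H → V(Γ) given by f(k,h) = {k, k·θ(h)(s₀)} is a graph isomorphism from the Cayley graph Cay(K ⋊_θ H, Σ₁ᵀ ∪ Σ₂ᵀ) to Γ, where Σ₁ᵀ = {(1,t) : t ∈ T} and Σ₂ᵀ = {(s₀·θ(t)(s₀⁻¹), t) : t ∈ T}. -/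
/-- The Cayley graph of a group `G` with connection set `S`. -/
def cayleyGraph (G : Type*) [Group G] (S : Set G) : SimpleGraph G :=
  SimpleGraph.fromRel (fun a b => a⁻¹ * b ∈ S)

theorem stmt6 (G H : Type*) [Group G] [Fintype G] [Group H] [Fintype H]
    (S : Set G) (hsymm : S = S⁻¹) (hgen : Subgroup.closure S = ⊤)
    (K : Subgroup G) (hK : K.index = 2) (hKS : (K : Set G) ∩ S = ∅)
    (s₀ : G) (hs₀ : s₀ ∈ S)
    (θ : H →* MulAut G) (hpres : ∀ (h : H), ∀ s ∈ S, θ h s ∈ S)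
    (hsimply : ∀ s₁ ∈ S, ∀ s₂ ∈ S, ∃! h : H, θ h s₁ = s₂)
    (T : Set H) :
    -- generators Sig₁ᵀ and Sig₂ᵀ, inside the ambient group G ⋊[θ] H
    let Sig₁ : Set (G ⋊[θ] H) := {x | ∃ t ∈ T, x = ⟨1, t⟩}
    let Sig₂ : Set (G ⋊[θ] H) := {x | ∃ t ∈ T, x = ⟨s₀ * θ t s₀⁻¹, t⟩}
    -- the Cayley graph X of the subgroup K ⋊[θ] H with connection set Sig₁ ∪ Sig₂
    let X : SimpleGraph {x : G ⋊[θ] H // x.left ∈ K} :=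
      SimpleGraph.fromRel (fun a b => (a : G ⋊[θ] H)⁻¹ * (b : G ⋊[θ] H) ∈ Sig₁ ∪ Sig₂)
    -- the graph Γ on the undirected edges e_g(h) of Cay(G,S)
    let Γ : SimpleGraph (Sym2 G) :=
      SimpleGraph.fromRel (fun e₁ e₂ => ∃ g : G, ∃ h : H, ∃ t ∈ T,
        (g ∈ K ∧ e₁ = s(g, g * θ h s₀) ∧ e₂ = s(g, g * θ (h * t) s₀)) ∨
        (g * s₀⁻¹ ∈ K ∧ e₁ = s(g * θ h s₀⁻¹, g) ∧ e₂ = s(g * θ (h * t) s₀⁻¹, g)))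
    let f : {x : G ⋊[θ] H // x.left ∈ K} → Sym2 G :=
      fun x => s((x : G ⋊[θ] H).left, (x : G ⋊[θ] H).left * θ (x : G ⋊[θ] H).right s₀)
    -- f is a graph isomorphism from X onto Γ, whose vertex set is the edge set of Cay(G,S)
    Function.Injective f ∧ Set.range f = (cayleyGraph G S).edgeSet ∧
      ∀ a b, X.Adj a b ↔ Γ.Adj (f a) (f b) := by
  intro Sig₁ Sig₂ X Γ f
  -- basic facts
  have hSK : ∀ s ∈ S, s ∉ K := fun s hs hsK =>
    Set.eq_empty_iff_forall_notMem.mp hKS s ⟨hsK, hs⟩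
  have h1S : (1 : G) ∉ S := fun h => hSK 1 h K.one_mem
  have hmul : ∀ a b : G, (a * b ∈ K ↔ (a ∈ K ↔ b ∈ K)) := fun a b =>
    Subgroup.mul_mem_iff_of_index_two hK
  have hinvS : ∀ s ∈ S, s⁻¹ ∈ S := by
    intro s hs
    have : s ∈ S⁻¹ := hsymm ▸ hs
    simpa using this
  have hcanc : ∀ h h' : H, θ h s₀ = θ h' s₀ → h = h' := by
    intro h h' he
    obtain ⟨u, _, huniq⟩ := hsimply s₀ hs₀ (θ h' s₀) (hpres h' s₀ hs₀)
    exact (huniq h he).trans (huniq h' rfl).symm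
  have hθs : ∀ h : H, θ h s₀ ∉ K := fun h => hSK _ (hpres h s₀ hs₀)
  -- injectivity
  have hinj : Function.Injective f := by
    intro a b hab
    simp only [f, Sym2.eq, Sym2.rel_iff', Prod.mk.injEq, Prod.swap_prod_mk] at hab
    rcases hab with ⟨h1, h2⟩ | ⟨h1, h2⟩
    · have hh : (a : G ⋊[θ] H).right = (b : G ⋊[θ] H).right := by
        apply hcanc
        rw [h1] at h2
        exact mul_left_cancel h2
      ext
      · exact h1
      · exact hh
    · exfalso
      apply hθs (b : G ⋊[θ] H).right
      have : θ (b : G ⋊[θ] H).right s₀ = ((b : G ⋊[θ] H).left)⁻¹ * (a : G ⋊[θ] H).left := by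
        rw [h1]; group
      rw [this]
      exact K.mul_mem (K.inv_mem b.2) a.2
  refine ⟨hinj, ?_, ?_⟩
  · -- range f = edge set of Cay(G,S)
    ext e
    constructor
    · rintro ⟨a, rfl⟩
      rw [SimpleGraph.mem_edgeSet]
      simp only [cayleyGraph, SimpleGraph.fromRel_adj]
      constructor
      · intro hcontra
        apply h1S
        have : θ (a : G ⋊[θ] H).right s₀ = 1 := left_eq_mul.mp hcontra
        rw [← this]
        exact hpres _ _ hs₀
      · left
        have : ((a : G ⋊[θ] H).left)⁻¹ * ((a : G ⋊[θ] H).left * θ (a : G ⋊[θ] H).right s₀)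
            = θ (a : G ⋊[θ] H).right s₀ := by group
        rw [this]
        exact hpres _ _ hs₀
    · intro he
      have key : ∀ u v : G, u⁻¹ * v ∈ S → s(u, v) ∈ Set.range f := by
        intro u v hs
        by_cases hu : u ∈ K
        · obtain ⟨h, hh, _⟩ := hsimply s₀ hs₀ (u⁻¹ * v) hs
          refine ⟨⟨⟨u, h⟩, hu⟩, ?_⟩
          simp only [f]
          congr 1
          rw [hh]; group
        · have hv : v ∈ K := by
            have : u * (u⁻¹ * v) ∈ K := (hmul _ _).mpr
              (by simp [hu, hSK _ hs])
            simpa using this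
          obtain ⟨h, hh, _⟩ := hsimply s₀ hs₀ (v⁻¹ * u) (by simpa [mul_inv_rev] using hinvS _ hs)
          refine ⟨⟨⟨v, h⟩, hv⟩, ?_⟩
          simp only [f]
          rw [Sym2.eq_swap]
          congr 1
          rw [hh]; group
      induction e with
      | h u v =>
        rw [SimpleGraph.mem_edgeSet] at he
        simp only [cayleyGraph, SimpleGraph.fromRel_adj] at he
        rcases he.2 with hs | hs
        · exact key u v hs
        · rw [Sym2.eq_swap]; exact key v u hs
  · -- adjacency preservation
    intro a b
    -- main correspondence: a⁻¹ b ∈ Σ₁ ∪ Σ₂ ↔ rel (f a) (f b)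
    have main : ∀ a b : {x : G ⋊[θ] H // x.left ∈ K},
        (a : G ⋊[θ] H)⁻¹ * (b : G ⋊[θ] H) ∈ Sig₁ ∪ Sig₂ ↔
        (∃ g : G, ∃ h : H, ∃ t ∈ T,
          (g ∈ K ∧ f a = s(g, g * θ h s₀) ∧ f b = s(g, g * θ (h * t) s₀)) ∨
          (g * s₀⁻¹ ∈ K ∧ f a = s(g * θ h s₀⁻¹, g) ∧ f b = s(g * θ (h * t) s₀⁻¹, g))) := by
      intro a b
      set k := (a : G ⋊[θ] H).left with hk
      set h := (a : G ⋊[θ] H).right with hh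
      set k' := (b : G ⋊[θ] H).left with hk'
      set h' := (b : G ⋊[θ] H).right with hh'
      constructor
      · rintro (⟨t, ht, hx⟩ | ⟨t, ht, hx⟩)
        · -- Σ₁ case
          have hb : (b : G ⋊[θ] H) = (a : G ⋊[θ] H) * ⟨1, t⟩ := by
            rw [← hx]; group
          have hbl : k' = k := by
            rw [hk', hb, SemidirectProduct.mul_left]; simp [hk]
          have hbr : h' = h * t := by
            rw [hh', hb, SemidirectProduct.mul_right]
          refine ⟨k, h, t, ht, Or.inl ⟨a.2, rfl, ?_⟩⟩
          simp only [f, ← hk', ← hh', hbl, hbr]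
        · -- Σ₂ case
          have hb : (b : G ⋊[θ] H) = (a : G ⋊[θ] H) * ⟨s₀ * θ t s₀⁻¹, t⟩ := by
            rw [← hx]; group
          have hbl : k' = k * θ h s₀ * θ (h * t) s₀⁻¹ := by
            rw [hk', hb, SemidirectProduct.mul_left, ← hk, ← hh]
            rw [map_mul, map_mul]
            simp [mul_assoc, MulAut.mul_apply]
          have hbr : h' = h * t := by
            rw [hh', hb, SemidirectProduct.mul_right]
          refine ⟨k * θ h s₀, h, t, ht, Or.inr ⟨?_, ?_, ?_⟩⟩
          · rw [mul_assoc, hmul, hmul]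
            simp [hk, a.2, hθs h, hSK _ (hinvS _ hs₀)]
          · simp only [f, ← hk, ← hh]
            congr 1
            rw [map_inv, mul_assoc, mul_inv_cancel, mul_one]
          · simp only [f, ← hk', ← hh', hbl, hbr, map_inv]
            rw [inv_mul_cancel_right]
      · rintro ⟨g, h₀, t, ht, ⟨hg, he₁, he₂⟩ | ⟨hg, he₁, he₂⟩⟩
        · -- first kind: translates to Σ₁
          simp only [f, Sym2.eq, Sym2.rel_iff', Prod.mk.injEq, Prod.swap_prod_mk,
            ← hk, ← hh, ← hk', ← hh'] at he₁ he₂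
          have hc₁ : k = g ∧ h = h₀ := by
            rcases he₁ with ⟨h1, h2⟩ | ⟨h1, h2⟩
            · rw [h1] at h2
              exact ⟨h1, hcanc _ _ (mul_left_cancel h2)⟩
            · exfalso
              apply hθs h₀
              have : θ h₀ s₀ = g⁻¹ * k := by rw [h1]; group
              rw [this]; exact K.mul_mem (K.inv_mem hg) a.2
          have hc₂ : k' = g ∧ h' = h₀ * t := by
            rcases he₂ with ⟨h1, h2⟩ | ⟨h1, h2⟩
            · rw [h1] at h2
              exact ⟨h1, hcanc _ _ (mul_left_cancel h2)⟩
            · exfalso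
              apply hθs (h₀ * t)
              have : θ (h₀ * t) s₀ = g⁻¹ * k' := by rw [h1]; group
              rw [this]; exact K.mul_mem (K.inv_mem hg) b.2
          left
          refine ⟨t, ht, ?_⟩
          have hb : (b : G ⋊[θ] H) = (a : G ⋊[θ] H) * ⟨1, t⟩ := by
            ext
            · rw [SemidirectProduct.mul_left, ← hk, ← hk', hc₁.1, hc₂.1]; simp
            · rw [SemidirectProduct.mul_right, ← hh, ← hh', hc₁.2, hc₂.2]
          rw [hb]; group
        · -- second kind: translates to Σ₂
          have hgK : g ∉ K := by
            intro hgk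
            exact hSK _ (hinvS _ hs₀) (by simpa [hgk] using (hmul g s₀⁻¹).mp hg)
          simp only [f, Sym2.eq, Sym2.rel_iff', Prod.mk.injEq, Prod.swap_prod_mk,
            ← hk, ← hh, ← hk', ← hh'] at he₁ he₂
          have hc₁ : k = g * θ h₀ s₀⁻¹ ∧ h = h₀ := by
            rcases he₁ with ⟨h1, h2⟩ | ⟨h1, h2⟩
            · refine ⟨h1, hcanc _ _ ?_⟩
              have : θ h s₀ = k⁻¹ * g := by rw [← h2]; group
              rw [this, h1, map_inv]; group
            · exact absurd (h1 ▸ a.2) hgK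
          have hc₂ : k' = g * θ (h₀ * t) s₀⁻¹ ∧ h' = h₀ * t := by
            rcases he₂ with ⟨h1, h2⟩ | ⟨h1, h2⟩
            · refine ⟨h1, hcanc _ _ ?_⟩
              have : θ h' s₀ = k'⁻¹ * g := by rw [← h2]; group
              rw [this, h1, map_inv]; group
            · exact absurd (h1 ▸ b.2) hgK
          right
          refine ⟨t, ht, ?_⟩
          have hb : (b : G ⋊[θ] H) = (a : G ⋊[θ] H) * ⟨s₀ * θ t s₀⁻¹, t⟩ := by
            ext
            · rw [SemidirectProduct.mul_left, ← hk, ← hk', hc₂.1, hc₁.1, ← hh, hc₁.2]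
              simp [map_mul, MulAut.mul_apply, map_inv, mul_assoc]
            · rw [SemidirectProduct.mul_right, ← hh, ← hh', hc₁.2, hc₂.2]
          rw [hb]; group
    -- now conclude
    simp only [X, Γ, SimpleGraph.fromRel_adj]
    constructor
    · rintro ⟨hne, hmem⟩
      refine ⟨fun hc => hne (hinj hc), ?_⟩
      rcases hmem with hmem | hmem
      · exact Or.inl ((main a b).mp hmem)
      · exact Or.inr ((main b a).mp hmem)
    · rintro ⟨hne, hmem⟩
      refine ⟨fun hc => hne (congrArg f hc), ?_⟩
      rcases hmem with hmem | hmem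
      · exact Or.inl ((main a b).mpr hmem)
      · exact Or.inr ((main b a).mpr hmem)
end

section
/- Let g(X) ∈ F₂[X] be a polynomial dividing X^n − 1 (with n odd) and let C be the cyclic code of length n generated by g. Let C' be the cyclic code of length 2n generated by g(X)². Then the codewords of C' are exactly the interleavings of two codewords of C: identifying F₂[X]/(X^{2n}−1) with F₂^{2n}, a word (c₀, c₁, ..., c_{2n−1}) lies in C' if and only if both (c₀, c₂, ..., c_{2n−2}) and (c₁, c₃, ..., c_{2n−1}) lie in C. -/
open Polynomial

private lemma sq_eq_expand2 (f : Polynomial (ZMod 2)) : f ^ 2 = expand (ZMod 2) 2 f := by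
  have := map_frobenius_expand 2 f
  rw [ZMod.frobenius_zmod, Polynomial.map_id] at this
  exact this.symm

private lemma deriv_sq (f : Polynomial (ZMod 2)) : derivative (f ^ 2) = 0 := by
  rw [derivative_pow]
  norm_num
  left; left
  decide

private lemma coeff_P {m : ℕ} (c : Fin m → ZMod 2) (k : ℕ) :
    (∑ i : Fin m, Polynomial.C (c i) * X ^ (i : ℕ)).coeff k
      = if h : k < m then c ⟨k, h⟩ else 0 := by
  rw [finset_sum_coeff]
  simp only [coeff_C_mul, coeff_X_pow, mul_ite, mul_one, mul_zero]
  split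
  · next h =>
    rw [Finset.sum_eq_single (⟨k, h⟩ : Fin m)]
    · simp
    · intro b _ hb
      have : k ≠ (b : ℕ) := fun hkb => hb (by simp [Fin.ext_iff, hkb.symm])
      simp [this]
    · simp
  · next h =>
    apply Finset.sum_eq_zero
    intro b _
    have : k ≠ (b : ℕ) := fun hkb => h (hkb ▸ b.isLt)
    simp [this]

private lemma mem_iff {m : ℕ} (d p : Polynomial (ZMod 2)) (hd : d ∣ X ^ m - 1) :
    (∃ q : Polynomial (ZMod 2), (X ^ m - 1 : Polynomial (ZMod 2)) ∣ (p - d * q)) ↔ d ∣ p := by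
  constructor
  · rintro ⟨q, r, hr⟩
    obtain ⟨h, hh⟩ := hd
    exact ⟨q + h * r, by linear_combination hr + r * hh⟩
  · rintro ⟨q, hq⟩
    exact ⟨q, by rw [hq]; simp⟩

private lemma split_sum (n : ℕ) (c : Fin (2 * n) → ZMod 2) :
    (∑ i : Fin (2 * n), Polynomial.C (c i) * X ^ (i : ℕ)) =
      (∑ i : Fin n, Polynomial.C (c ⟨2 * i.val, by have := i.isLt; omega⟩) * X ^ (i : ℕ)) ^ 2
      + X * (∑ i : Fin n, Polynomial.C (c ⟨2 * i.val + 1, by have := i.isLt; omega⟩) * X ^ (i : ℕ)) ^ 2 := by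
  ext k
  rw [sq_eq_expand2, sq_eq_expand2, coeff_add, coeff_expand (by norm_num)]
  rcases Nat.even_or_odd k with ⟨j, hj⟩ | ⟨j, hj⟩
  · subst hj
    have h2 : 2 ∣ j + j := ⟨j, by ring⟩
    have hX : (X * (expand (ZMod 2) 2) (∑ i : Fin n, Polynomial.C (c ⟨2 * i.val + 1, by omega⟩) * X ^ (i : ℕ))).coeff (j + j) = 0 := by
      rcases Nat.eq_zero_or_pos j with rfl | hj0
      · simp
      · have : j + j = (j + j - 1) + 1 := by omega
        rw [this, coeff_X_mul, coeff_expand (by norm_num), if_neg (by omega)]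
    rw [hX, add_zero, if_pos h2, coeff_P, coeff_P]
    have : (j + j) / 2 = j := by omega
    rw [this]
    by_cases h : j < n
    · rw [dif_pos h, dif_pos (by omega)]
      congr 1
      simp [Fin.ext_iff]; omega
    · rw [dif_neg h, dif_neg (by omega)]
  · subst hj
    rw [if_neg (by omega), zero_add]
    have : 2 * j + 1 = (2 * j) + 1 := rfl
    rw [this, coeff_X_mul, coeff_expand (by norm_num), if_pos ⟨j, by ring⟩, coeff_P, coeff_P]
    have : (2 * j) / 2 = j := by omega
    rw [this]
    by_cases h : j < n
    · rw [dif_pos h, dif_pos (by omega)]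
    · rw [dif_neg h, dif_neg (by omega)]

theorem stmt12 (n : ℕ) (hn : Odd n) (hpos : 0 < n)
    (g : Polynomial (ZMod 2)) (hg : g ∣ X ^ n - 1) :
    -- the polynomial associated to a coefficient vector
    let P : ∀ m : ℕ, (Fin m → ZMod 2) → Polynomial (ZMod 2) :=
      fun m c => ∑ i : Fin m, Polynomial.C (c i) * X ^ (i : ℕ)
    -- membership in the cyclic code of length n generated by g
    let memC : (Fin n → ZMod 2) → Prop :=
      fun c => ∃ q : Polynomial (ZMod 2), (X ^ n - 1 : Polynomial (ZMod 2)) ∣ (P n c - g * q)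
    -- membership in the cyclic code of length 2n generated by g²
    let memC' : (Fin (2 * n) → ZMod 2) → Prop :=
      fun c => ∃ q : Polynomial (ZMod 2),
        (X ^ (2 * n) - 1 : Polynomial (ZMod 2)) ∣ (P (2 * n) c - g ^ 2 * q)
    -- a word is in C' iff its even part and its odd part are both in C
    ∀ c : Fin (2 * n) → ZMod 2,
      memC' c ↔
        (memC (fun i : Fin n => c ⟨2 * i.val, by omega⟩) ∧
         memC (fun i : Fin n => c ⟨2 * i.val + 1, by omega⟩)) := by
  intro P memC memC' c
  have hg2 : g ^ 2 ∣ X ^ (2 * n) - 1 := by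
    have key : (X ^ (2 * n) - 1 : Polynomial (ZMod 2)) = (X ^ n - 1) ^ 2 := by
      rw [sq_eq_expand2]
      simp [map_sub, map_pow, pow_mul, mul_comm 2 n, pow_right_comm]
    rw [key]
    exact pow_dvd_pow_of_dvd hg 2
  simp only [memC', memC, P, mem_iff _ _ hg, mem_iff _ _ hg2]
  set A : Polynomial (ZMod 2) := ∑ i : Fin n, Polynomial.C (c ⟨2 * i.val, by omega⟩) * X ^ (i : ℕ)
  set B : Polynomial (ZMod 2) := ∑ i : Fin n, Polynomial.C (c ⟨2 * i.val + 1, by omega⟩) * X ^ (i : ℕ)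
  rw [split_sum n c]
  show g ^ 2 ∣ A ^ 2 + X * B ^ 2 ↔ g ∣ A ∧ g ∣ B
  constructor
  · rintro hdvd
    have hB : g ∣ B := by
      obtain ⟨q, hq⟩ := hdvd
      have hder : (B : Polynomial (ZMod 2)) ^ 2 = g ^ 2 * derivative q := by
        have := congrArg derivative hq
        rw [derivative_add, deriv_sq, derivative_mul, deriv_sq, derivative_X, derivative_mul,
          deriv_sq, zero_add, one_mul, zero_mul, zero_add] at this
        linear_combination this
      have : g ^ 2 ∣ B ^ 2 := ⟨derivative q, hder⟩
      rwa [IsIntegrallyClosed.pow_dvd_pow_iff (by norm_num)] at this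
    have hA : g ∣ A := by
      have h1 : g ^ 2 ∣ X * B ^ 2 := Dvd.dvd.mul_left (pow_dvd_pow_of_dvd hB 2) X
      have h2 : g ^ 2 ∣ A ^ 2 := by
        have := dvd_sub hdvd h1
        simpa using this
      rwa [IsIntegrallyClosed.pow_dvd_pow_iff (by norm_num)] at h2
    exact ⟨hA, hB⟩
  · rintro ⟨hA, hB⟩
    exact dvd_add (pow_dvd_pow_of_dvd hA 2) (Dvd.dvd.mul_left (pow_dvd_pow_of_dvd hB 2) X)
end

section
/- Let Γ = Cay(G,S) be a Cayley graph where S = S⁻¹ generates G, let H be a group with θ : H → Aut(G) preserving S, fix s₀ ∈ S, and define for each vertex g the bijection h ↦ (g, g·θ(h)(s₀)) from H to the directed edges at g. Let B ⊆ F₂^H be a code invariant under left translation by H (a code defined on H). Then the resulting Cayley code C ⊆ F₂^{E} (where E is the set of directed edges, and f ∈ C iff for every g ∈ G the local word h ↦ f(g, g·θ(h)(s₀)) lies in B) is invariant under the action of G ⋊_θ H on E given by (k,h')·(g, gs) = (k·θ(h')(g), k·θ(h')(gs)). -/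
theorem stmt14 (G H : Type*) [Group G] [Fintype G] [Group H] [Fintype H]
    (S : Set G) (hsymm : S = S⁻¹) (hgen : Subgroup.closure S = ⊤)
    (θ : H →* MulAut G) (hpres : ∀ (h : H), ∀ s ∈ S, θ h s ∈ S)
    (s₀ : G) (hs₀ : s₀ ∈ S)
    -- B is a code on H invariant under left translation by H
    (B : Submodule (ZMod 2) (H → ZMod 2))
    (hB : ∀ b ∈ B, ∀ h₀ : H, (fun h => b (h₀ * h)) ∈ B)
    -- f is a codeword of the Cayley code C: every local word lies in B
    (f : G × G → ZMod 2)
    (hf : ∀ g : G, (fun h : H => f (g, g * θ h s₀)) ∈ B) :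
    -- then C is invariant under the action of G ⋊[θ] H on directed edges
    ∀ x : G ⋊[θ] H, ∀ g : G,
      (fun h : H =>
        f (x.left * θ x.right g, x.left * θ x.right (g * θ h s₀))) ∈ B := by
  intro x g
  have := hB _ (hf (x.left * θ x.right g)) x.right
  convert this using 2 with h
  simp only [map_mul, MulAut.mul_apply, mul_assoc]
end
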